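/- Let f₁ : ℝᵐ → ℝᵐ and f₂ : ℝᵐ × ℝᵏ → ℝᵏ be continuous, and consider the cascade ẋ₁ = f₁(x₁), ẋ₂ = f₂(x₁, x₂) on ℝᵐ × ℝᵏ, where a solution of the cascade is a differentiable function (φ₁, φ₂) : [0, T) → ℝᵐ × ℝᵏ with φ₁′(t) = f₁(φ₁(t)) and φ₂′(t) = f₂(φ₁(t), φ₂(t)) for all t ∈ [0, T), complete if T = ∞. Suppose the origin 0 ∈ ℝᵐ is stable and globally attractive for the upper subsystem ẋ₁ = f₁(x₁), and the origin 0 ∈ ℝᵏ is stable and globally attractive for the zero-input lower subsystem ẋ₂ = f₂(0, x₂). Then the origin (0,0) is stable for the cascade, and every bounded complete solution (φ₁, φ₂) of the cascade satisfies (φ₁(t), φ₂(t)) → (0,0) as t → ∞. -/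

import Mathlib

open Metric Filter Topology

/-- `φ` restricted to `[0, T)` (with `0 < T ≤ ∞`) is a solution of `ẋ = h x`. -/
def IsSolutionOn {E : Type*} [NormedAddCommGroup E] [NormedSpace ℝ E]
    (h : E → E) (T : EReal) (φ : ℝ → E) : Prop :=
  0 < T ∧ ∀ t : ℝ, 0 ≤ t → (t : EReal) < T →
    HasDerivWithinAt φ (h (φ t)) {s : ℝ | 0 ≤ s ∧ (s : EReal) < T} t

/-- `(φ₁, φ₂)` restricted to `[0, T)` is a solution of the cascade
`ẋ₁ = f₁ x₁`, `ẋ₂ = f₂ (x₁, x₂)`. -/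
def IsCascadeSolution {m k : ℕ}
    (f₁ : EuclideanSpace ℝ (Fin m) → EuclideanSpace ℝ (Fin m))
    (f₂ : EuclideanSpace ℝ (Fin m) × EuclideanSpace ℝ (Fin k) → EuclideanSpace ℝ (Fin k))
    (T : EReal) (φ₁ : ℝ → EuclideanSpace ℝ (Fin m))
    (φ₂ : ℝ → EuclideanSpace ℝ (Fin k)) : Prop :=
  0 < T ∧ ∀ t : ℝ, 0 ≤ t → (t : EReal) < T →
    HasDerivWithinAt φ₁ (f₁ (φ₁ t)) {s : ℝ | 0 ≤ s ∧ (s : EReal) < T} t ∧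
    HasDerivWithinAt φ₂ (f₂ (φ₁ t, φ₂ t)) {s : ℝ | 0 ≤ s ∧ (s : EReal) < T} t

open Set
open scoped NNReal

section Helpers

variable {E1 E2 : Type*} [NormedAddCommGroup E1] [NormedSpace ℝ E1] [ProperSpace E1]
  [NormedAddCommGroup E2] [NormedSpace ℝ E2] [ProperSpace E2]

open scoped NNReal

/-- clamp lemmas -/
lemma clamp_mem {L : ℝ} (hL : 0 ≤ L) (t : ℝ) : max 0 (min t L) ∈ Icc 0 L :=
  ⟨le_max_left _ _, max_le hL (min_le_right _ _)⟩

lemma clamp_eq {L t : ℝ} (ht : 0 ≤ t) (htL : t ≤ L) : max 0 (min t L) = t := by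
  rw [min_eq_left htL, max_eq_right ht]

/-- The key compactness lemma: a sequence of (clamped) solutions of the perturbed
lower system, with inputs tending to zero uniformly, has a subsequence converging
pointwise to a solution of the zero-input system on `[0, Linf)`. -/
lemma limit_solution (f₂ : E1 × E2 → E2) (hf₂ : Continuous f₂)
    (Linf : EReal) (hLinf : 0 < Linf) (L : ℕ → ℝ)
    (hLmem : ∀ A : ℝ, (A : EReal) < Linf → ∀ᶠ n in atTop, A ≤ L n)
    (α : ℕ → ℝ → E1) (β : ℕ → ℝ → E2) (C : ℝ≥0) (R : ℝ)
    (hαc : ∀ n, Continuous (α n)) (hlip : ∀ n, LipschitzWith C (β n))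
    (hβbd : ∀ n t, ‖β n t‖ ≤ R) (hαbd : ∀ n t, ‖α n t‖ ≤ R)
    (hαsmall : ∀ η : ℝ, 0 < η → ∀ᶠ n in atTop, ∀ t, ‖α n t‖ ≤ η)
    (hderiv : ∀ n t, 0 ≤ t → t ≤ L n →
      HasDerivWithinAt (β n) (f₂ (α n t, β n t)) (Icc 0 (L n)) t) :
    ∃ σ : ℕ → ℕ, StrictMono σ ∧ ∃ ψ : ℝ → E2,
      IsSolutionOn (fun y => f₂ (0, y)) Linf ψ ∧
      ∀ t : ℝ, Tendsto (fun n => β (σ n) t) atTop (𝓝 (ψ t)) := by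
  haveI : CompactSpace (Metric.closedBall (0:E2) R) :=
    isCompact_iff_compactSpace.mp (isCompact_closedBall _ _)
  obtain ⟨G, σ, hσ, hGconv⟩ := CompactSpace.tendsto_subseq
    (fun n (q : ℚ) => (⟨β n (q:ℝ), mem_closedBall_zero_iff.mpr (hβbd n (q:ℝ))⟩ :
      Metric.closedBall (0:E2) R))
  have hq : ∀ q : ℚ, Tendsto (fun n => β (σ n) (q:ℝ)) atTop (𝓝 ((G q : E2))) := by
    intro q
    exact (continuous_subtype_val.tendsto (G q)).comp (tendsto_pi_nhds.mp hGconv q)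
  have hcau : ∀ t : ℝ, CauchySeq fun n => β (σ n) t := by
    intro t
    rw [Metric.cauchySeq_iff]
    intro ε hε
    obtain ⟨q, hqnear⟩ := exists_rat_near t (show (0:ℝ) < ε/(4*((C:ℝ)+1)) by positivity)
    obtain ⟨N, hN⟩ := Metric.cauchySeq_iff.mp (hq q).cauchySeq (ε/2) (by positivity)
    refine ⟨N, fun a ha b hb => ?_⟩
    have hd : ∀ n, dist (β (σ n) t) (β (σ n) (q:ℝ)) ≤ ε/4 := by
      intro n
      calc dist (β (σ n) t) (β (σ n) (q:ℝ)) ≤ C * dist t (q:ℝ) := (hlip (σ n)).dist_le_mul _ _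
        _ ≤ ((C:ℝ)+1) * (ε/(4*((C:ℝ)+1))) := by
              apply mul_le_mul (by linarith [C.coe_nonneg]) ?_ dist_nonneg
                (by linarith [C.coe_nonneg])
              rw [Real.dist_eq]; exact hqnear.le
        _ = ε/4 := by field_simp
    have h2 := hd b
    rw [dist_comm] at h2
    calc dist (β (σ a) t) (β (σ b) t)
        ≤ dist (β (σ a) t) (β (σ a) (q:ℝ)) + dist (β (σ a) (q:ℝ)) (β (σ b) (q:ℝ))
            + dist (β (σ b) (q:ℝ)) (β (σ b) t) := dist_triangle4 _ _ _ _
      _ < ε/4 + ε/2 + ε/4 := by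
          have h3 := hN a ha b hb
          have h1 := hd a
          linarith
      _ = ε := by ring
  have hex : ∀ t : ℝ, ∃ y : E2, Tendsto (fun n => β (σ n) t) atTop (𝓝 y) :=
    fun t => cauchySeq_tendsto_of_complete (hcau t)
  choose ψ hψ using hex
  refine ⟨σ, hσ, ψ, ?_, hψ⟩
  have hψlip : LipschitzWith C ψ := by
    apply LipschitzWith.of_dist_le_mul
    intro x y
    apply le_of_tendsto ((hψ x).dist (hψ y))
    exact Eventually.of_forall fun n => (hlip (σ n)).dist_le_mul _ _
  obtain ⟨B, hB⟩ := ((isCompact_closedBall (0:E1) R).prod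
      (isCompact_closedBall (0:E2) R)).exists_bound_of_continuousOn hf₂.continuousOn
  have hBn : ∀ n s, ‖f₂ (α n s, β n s)‖ ≤ B := fun n s =>
    hB _ (Set.mem_prod.mpr ⟨mem_closedBall_zero_iff.mpr (hαbd n s),
      mem_closedBall_zero_iff.mpr (hβbd n s)⟩)
  have key : ∀ (n : ℕ) (t : ℝ), 0 ≤ t → t ≤ L n →
      β n t = β n 0 + ∫ s in (0:ℝ)..t, f₂ (α n s, β n s) := by
    intro n t ht htL
    have hint : Continuous fun s => f₂ (α n s, β n s) :=
      hf₂.comp ((hαc n).prodMk (hlip n).continuous)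
    have hder : ∀ x ∈ Ioo 0 t, HasDerivWithinAt (β n) (f₂ (α n x, β n x)) (Ioi x) x := by
      intro x hx
      have h1 := hderiv n x hx.1.le (hx.2.le.trans htL)
      exact (h1.hasDerivAt (Icc_mem_nhds hx.1 (lt_of_lt_of_le hx.2 htL))).hasDerivWithinAt
    have := intervalIntegral.integral_eq_sub_of_hasDeriv_right_of_le ht
      (hlip n).continuous.continuousOn hder (hint.intervalIntegrable _ _)
    rw [this]; abel
  have hid : ∀ t : ℝ, 0 ≤ t → (t : EReal) < Linf →
      ψ t = ψ 0 + ∫ s in (0:ℝ)..t, f₂ (0, ψ s) := by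
    intro t ht htL
    have hev : ∀ᶠ n in atTop, t ≤ L (σ n) := hσ.tendsto_atTop.eventually (hLmem t htL)
    have htint : Tendsto (fun n => ∫ s in (0:ℝ)..t, f₂ (α (σ n) s, β (σ n) s)) atTop
        (𝓝 (∫ s in (0:ℝ)..t, f₂ (0, ψ s))) := by
      apply intervalIntegral.tendsto_integral_filter_of_dominated_convergence (fun _ => B)
      · exact Eventually.of_forall fun n =>
          (hf₂.comp ((hαc (σ n)).prodMk (hlip (σ n)).continuous)).aestronglyMeasurable
      · exact Eventually.of_forall fun n => (MeasureTheory.ae_of_all _ fun s _ => hBn (σ n) s)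
      · exact intervalIntegrable_const
      · refine MeasureTheory.ae_of_all _ fun s _ => ?_
        have hα0 : Tendsto (fun n => α (σ n) s) atTop (𝓝 0) := by
          rw [NormedAddCommGroup.tendsto_nhds_zero]
          intro ε hε
          have h2 := hσ.tendsto_atTop.eventually (hαsmall (ε/2) (by positivity))
          exact h2.mono fun n hn => lt_of_le_of_lt (hn s) (by linarith)
        exact (hf₂.tendsto (0, ψ s)).comp (hα0.prodMk_nhds (hψ s))
    have h0 : Tendsto (fun n => β (σ n) 0 + ∫ s in (0:ℝ)..t, f₂ (α (σ n) s, β (σ n) s)) atTop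
        (𝓝 (ψ 0 + ∫ s in (0:ℝ)..t, f₂ (0, ψ s))) := (hψ 0).add htint
    have heq : (fun n => β (σ n) 0 + ∫ s in (0:ℝ)..t, f₂ (α (σ n) s, β (σ n) s))
        =ᶠ[atTop] fun n => β (σ n) t :=
      hev.mono fun n hn => (key (σ n) t ht hn).symm
    exact tendsto_nhds_unique (hψ t) (h0.congr' heq)
  refine ⟨hLinf, ?_⟩
  intro t ht htL
  have hcont : Continuous fun s => f₂ (0, ψ s) :=
    hf₂.comp (continuous_const.prodMk hψlip.continuous)
  have hχ : HasDerivAt (fun u => ψ 0 + ∫ s in (0:ℝ)..u, f₂ (0, ψ s)) (f₂ (0, ψ t)) t := by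
    have := intervalIntegral.integral_hasDerivAt_right
      (hcont.intervalIntegrable 0 t)
      (hcont.stronglyMeasurableAtFilter _ _)
      hcont.continuousAt
    exact this.const_add (ψ 0)
  exact (hχ.hasDerivWithinAt (s := {s : ℝ | 0 ≤ s ∧ (s : EReal) < Linf})).congr
    (fun y hy => hid y hy.1 hy.2) (hid t ht htL)

/-- No limit solution can stay forever in an annulus away from the origin. -/
lemma no_complete_annulus (f₂ : E1 × E2 → E2) (hf₂ : Continuous f₂)
    (hattr : ∀ ψ : ℝ → E2, IsSolutionOn (fun y => f₂ (0, y)) ⊤ ψ → Tendsto ψ atTop (𝓝 0))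
    (c : ℝ) (hc : 0 < c)
    (L : ℕ → ℝ) (hLtop : ∀ A : ℝ, ∀ᶠ n in atTop, A ≤ L n)
    (α : ℕ → ℝ → E1) (β : ℕ → ℝ → E2) (C : ℝ≥0) (R : ℝ)
    (hαc : ∀ n, Continuous (α n)) (hlip : ∀ n, LipschitzWith C (β n))
    (hβbd : ∀ n t, ‖β n t‖ ≤ R) (hαbd : ∀ n t, ‖α n t‖ ≤ R)
    (hαsmall : ∀ η : ℝ, 0 < η → ∀ᶠ n in atTop, ∀ t, ‖α n t‖ ≤ η)
    (hderiv : ∀ n t, 0 ≤ t → t ≤ L n →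
      HasDerivWithinAt (β n) (f₂ (α n t, β n t)) (Icc 0 (L n)) t)
    (hβlow : ∀ n t, 0 < t → t ≤ L n → c ≤ ‖β n t‖) : False := by
  obtain ⟨σ, hσ, ψ, hψsol, hψconv⟩ := limit_solution f₂ hf₂ ⊤
    (by rw [← EReal.coe_zero]; exact EReal.coe_lt_top 0) L
    (fun A _ => hLtop A) α β C R hαc hlip hβbd hαbd hαsmall hderiv
  have hψlow : ∀ t : ℝ, 0 < t → c ≤ ‖ψ t‖ := by
    intro t htpos
    have hev : ∀ᶠ n in atTop, t ≤ L (σ n) := hσ.tendsto_atTop.eventually (hLtop t)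
    exact ge_of_tendsto (hψconv t).norm (hev.mono fun n hn => hβlow (σ n) t htpos hn)
  have htend := hattr ψ hψsol
  obtain ⟨t, ht1, ht2⟩ :=
    ((NormedAddCommGroup.tendsto_nhds_zero.mp htend c hc).and (eventually_gt_atTop 0)).exists
  exact absurd (hψlow t ht2) (not_le.mpr ht1)

/-- The annulus-escape contradiction: solutions starting at `δ/2`, staying above `δ/2`,
and reaching `ε₀` at time `L n ≥ c₀`, with vanishing inputs, contradict stability and
attractivity of the zero-input lower system. -/
lemma no_annulus_escape (f₂ : E1 × E2 → E2) (hf₂ : Continuous f₂)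
    (ε₀ δ : ℝ) (hε₀ : 0 < ε₀) (hδ : 0 < δ)
    (hstab : ∀ (T : EReal) (ψ : ℝ → E2), IsSolutionOn (fun y => f₂ (0, y)) T ψ → ‖ψ 0‖ < δ →
      ∀ t : ℝ, 0 ≤ t → (t : EReal) < T → ‖ψ t‖ < ε₀/2)
    (hattr : ∀ ψ : ℝ → E2, IsSolutionOn (fun y => f₂ (0, y)) ⊤ ψ → Tendsto ψ atTop (𝓝 0))
    (c₀ : ℝ) (hc₀ : 0 < c₀) (L : ℕ → ℝ) (hLc : ∀ n, c₀ ≤ L n)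
    (α : ℕ → ℝ → E1) (β : ℕ → ℝ → E2) (C : ℝ≥0) (R : ℝ)
    (hαc : ∀ n, Continuous (α n)) (hlip : ∀ n, LipschitzWith C (β n))
    (hβbd : ∀ n t, ‖β n t‖ ≤ R) (hαbd : ∀ n t, ‖α n t‖ ≤ R)
    (hαsmall : ∀ η : ℝ, 0 < η → ∀ᶠ n in atTop, ∀ t, ‖α n t‖ ≤ η)
    (hderiv : ∀ n t, 0 ≤ t → t ≤ L n →
      HasDerivWithinAt (β n) (f₂ (α n t, β n t)) (Icc 0 (L n)) t)
    (hβ0 : ∀ n, ‖β n 0‖ ≤ δ/2)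
    (hβlow : ∀ n t, 0 < t → t ≤ L n → δ/2 ≤ ‖β n t‖)
    (hβend : ∀ n, ε₀ ≤ ‖β n (L n)‖) : False := by
  by_cases hbdd : ∀ A : ℝ, ∀ᶠ n in atTop, A ≤ L n
  · exact no_complete_annulus f₂ hf₂ hattr (δ/2) (by positivity) L hbdd α β C R hαc hlip
      hβbd hαbd hαsmall hderiv hβlow
  · push_neg at hbdd
    obtain ⟨A, hA⟩ := hbdd
    have hfreq : ∃ᶠ n in atTop, L n ∈ Icc c₀ A := hA.mono fun n hn => ⟨hLc n, hn.le⟩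
    obtain ⟨Λ, hΛmem, σ₀, hσ₀, hσ₀L⟩ := isCompact_Icc.tendsto_subseq' hfreq
    have hΛpos : 0 < Λ := lt_of_lt_of_le hc₀ hΛmem.1
    have hLmem : ∀ A' : ℝ, (A' : EReal) < (Λ : EReal) → ∀ᶠ n in atTop, A' ≤ L (σ₀ n) := by
      intro A' hA'
      have h1 : A' < Λ := by exact_mod_cast hA'
      exact ((tendsto_order.mp hσ₀L).1 A' h1).mono fun n hn => hn.le
    obtain ⟨σ₁, hσ₁, ψ, hψsol, hψconv⟩ := limit_solution f₂ hf₂ (Λ : EReal)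
      (by exact_mod_cast hΛpos) (fun n => L (σ₀ n)) hLmem
      (fun n => α (σ₀ n)) (fun n => β (σ₀ n)) C R (fun n => hαc _) (fun n => hlip _)
      (fun n t => hβbd _ t) (fun n t => hαbd _ t)
      (fun η hη => hσ₀.tendsto_atTop.eventually (hαsmall η hη))
      (fun n t ht htL => hderiv _ t ht htL)
    have hψ0 : ‖ψ 0‖ < δ := by
      have h1 : ‖ψ 0‖ ≤ δ/2 :=
        le_of_tendsto (hψconv 0).norm (Eventually.of_forall fun n => hβ0 _)
      linarith
    have hstabψ := hstab (Λ : EReal) ψ hψsol hψ0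
    set τ : ℝ := max (Λ/2) (Λ - ε₀/(4*((C:ℝ)+1))) with hτdef
    have hτ0 : 0 ≤ τ := le_trans (by linarith) (le_max_left _ _)
    have hε4 : 0 < ε₀/(4*((C:ℝ)+1)) := by positivity
    have hτΛ : τ < Λ := max_lt (by linarith) (by linarith)
    have hΛτ : Λ - τ ≤ ε₀/(4*((C:ℝ)+1)) := by
      have := le_max_right (Λ/2) (Λ - ε₀/(4*((C:ℝ)+1)))
      linarith
    have hψτ : ‖ψ τ‖ < ε₀/2 := hstabψ τ hτ0 (by exact_mod_cast hτΛ)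
    have hev : ∀ n, ε₀ ≤ ‖β (σ₀ (σ₁ n)) τ‖ + (C:ℝ) * dist (L (σ₀ (σ₁ n))) τ := by
      intro n
      have h1 := hβend (σ₀ (σ₁ n))
      have h2 : dist (β (σ₀ (σ₁ n)) (L (σ₀ (σ₁ n)))) (β (σ₀ (σ₁ n)) τ)
          ≤ C * dist (L (σ₀ (σ₁ n))) τ := (hlip _).dist_le_mul _ _
      have h3 := norm_sub_norm_le (β (σ₀ (σ₁ n)) (L (σ₀ (σ₁ n)))) (β (σ₀ (σ₁ n)) τ)
      rw [← dist_eq_norm] at h3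
      linarith
    have hlim : Tendsto (fun n => ‖β (σ₀ (σ₁ n)) τ‖ + (C:ℝ) * dist (L (σ₀ (σ₁ n))) τ) atTop
        (𝓝 (‖ψ τ‖ + (C:ℝ) * dist Λ τ)) :=
      ((hψconv τ).norm).add (tendsto_const_nhds.mul
        ((hσ₀L.comp hσ₁.tendsto_atTop).dist tendsto_const_nhds))
    have hfin : ε₀ ≤ ‖ψ τ‖ + (C:ℝ) * dist Λ τ :=
      ge_of_tendsto hlim (Eventually.of_forall hev)
    have hdist : dist Λ τ ≤ ε₀/(4*((C:ℝ)+1)) := by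
      rw [Real.dist_eq, abs_of_nonneg (by linarith)]; linarith
    have hC4 : (C:ℝ) * dist Λ τ ≤ ε₀/4 := by
      have h5 : (C:ℝ) * dist Λ τ ≤ (C:ℝ) * (ε₀/(4*((C:ℝ)+1))) :=
        mul_le_mul_of_nonneg_left hdist C.coe_nonneg
      have h6 : (C:ℝ) * (ε₀/(4*((C:ℝ)+1))) ≤ ε₀/4 := by
        rw [mul_div_assoc', div_le_div_iff₀ (by positivity) (by positivity)]
        nlinarith [C.coe_nonneg, hε₀.le]
      linarith
    linarith

end Helpers


section Translate

open scoped NNReal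

variable {m k : ℕ}
    {f₁ : EuclideanSpace ℝ (Fin m) → EuclideanSpace ℝ (Fin m)}
    {f₂ : EuclideanSpace ℝ (Fin m) × EuclideanSpace ℝ (Fin k) → EuclideanSpace ℝ (Fin k)}
    {T : EReal} {φ₁ : ℝ → EuclideanSpace ℝ (Fin m)} {φ₂ : ℝ → EuclideanSpace ℝ (Fin k)}

lemma cascade_translate (hcas : IsCascadeSolution f₁ f₂ T φ₁ φ₂)
    {b L : ℝ} (hb : 0 ≤ b) (hL : 0 ≤ L) (hτT : ((b + L : ℝ) : EReal) < T)
    (C : ℝ≥0) (hC : ∀ u, b ≤ u → u ≤ b + L → ‖f₂ (φ₁ u, φ₂ u)‖ ≤ C) :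
    Continuous (fun t => φ₁ (b + max 0 (min t L))) ∧
    LipschitzWith C (fun t => φ₂ (b + max 0 (min t L))) ∧
    ∀ t, 0 ≤ t → t ≤ L →
      HasDerivWithinAt (fun t => φ₂ (b + max 0 (min t L)))
        (f₂ (φ₁ (b + max 0 (min t L)), φ₂ (b + max 0 (min t L))))
        (Icc 0 L) t := by
  set τ : ℝ := b + L with hτdef
  have hbτ : b ≤ τ := by simp only [hτdef]; linarith
  have hsub : Icc b τ ⊆ {s : ℝ | 0 ≤ s ∧ (s : EReal) < T} := fun u hu =>
    ⟨hb.trans hu.1, lt_of_le_of_lt (by exact_mod_cast hu.2) hτT⟩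
  have hder2 : ∀ u ∈ Icc b τ, HasDerivWithinAt φ₂ (f₂ (φ₁ u, φ₂ u)) (Icc b τ) u := fun u hu =>
    ((hcas.2 u (hb.trans hu.1) (lt_of_le_of_lt (by exact_mod_cast hu.2) hτT)).2).mono hsub
  have hder1 : ∀ u ∈ Icc b τ, HasDerivWithinAt φ₁ (f₁ (φ₁ u)) (Icc b τ) u := fun u hu =>
    ((hcas.2 u (hb.trans hu.1) (lt_of_le_of_lt (by exact_mod_cast hu.2) hτT)).1).mono hsub
  have hc1 : ContinuousOn φ₁ (Icc b τ) := fun u hu => (hder1 u hu).continuousWithinAt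
  have hlipOn : LipschitzOnWith C φ₂ (Icc b τ) :=
    (convex_Icc b τ).lipschitzOnWith_of_nnnorm_hasDerivWithin_le hder2
      (fun u hu => by
        rw [← NNReal.coe_le_coe, coe_nnnorm]
        exact hC u hu.1 hu.2)
  have hclamp : LipschitzWith 1 (fun t : ℝ => max 0 (min t L)) :=
    (LipschitzWith.id.min_const L).const_max 0
  have hg : LipschitzWith 1 (fun t : ℝ => b + max 0 (min t L)) := by
    have heq : (fun t : ℝ => b + max 0 (min t L))
        = (fun x : ℝ => b + x) ∘ (fun t => max 0 (min t L)) := rfl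
    rw [heq]
    have hadd : LipschitzWith 1 (fun x : ℝ => b + x) := LipschitzWith.of_dist_le_mul fun x y => by
      rw [Real.dist_eq, Real.dist_eq, NNReal.coe_one, one_mul, add_sub_add_left_eq_sub]
    simpa using hadd.comp hclamp
  have hgmaps : ∀ t : ℝ, b + max 0 (min t L) ∈ Icc b τ := by
    intro t
    have h1 := clamp_mem hL t
    simp only [hτdef, Set.mem_Icc]
    constructor <;> linarith [h1.1, h1.2]
  refine ⟨?_, ?_, ?_⟩
  · exact hc1.comp_continuous (continuous_const.add hclamp.continuous) hgmaps
  · have hcomp := hlipOn.comp (hg.lipschitzOnWith (s := Set.univ)) (fun t _ => hgmaps t)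
    rw [mul_one] at hcomp
    exact lipschitzOnWith_univ.mp hcomp
  · intro t ht htL
    have hmem : b + t ∈ Icc b τ := by
      simp only [hτdef, Set.mem_Icc]; constructor <;> linarith
    have hinner : HasDerivWithinAt (fun s : ℝ => b + s) 1 (Icc 0 L) t :=
      ((hasDerivAt_id t).const_add b).hasDerivWithinAt
    have hmapsTo : Set.MapsTo (fun s : ℝ => b + s) (Icc 0 L) (Icc b τ) := by
      intro s hs
      simp only [Set.mem_Icc] at hs
      simp only [hτdef, Set.mem_Icc]
      constructor <;> linarith [hs.1, hs.2]
    have hcomp := HasDerivWithinAt.scomp (x := t) (hder2 (b + t) hmem) hinner hmapsTo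
    rw [one_smul] at hcomp
    have heqt : b + max 0 (min t L) = b + t := by rw [clamp_eq ht htL]
    rw [heqt]
    exact hcomp.congr (fun y hy => by show φ₂ _ = _; rw [clamp_eq hy.1 hy.2]; rfl)
      (by show φ₂ _ = _; rw [clamp_eq ht htL]; rfl)

end Translate

theorem cascade_stability_ct {m k : ℕ}
    (f₁ : EuclideanSpace ℝ (Fin m) → EuclideanSpace ℝ (Fin m))
    (f₂ : EuclideanSpace ℝ (Fin m) × EuclideanSpace ℝ (Fin k) → EuclideanSpace ℝ (Fin k))
    (hf₁ : Continuous f₁) (hf₂ : Continuous f₂)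
    -- the origin is stable for the upper subsystem ẋ₁ = f₁ x₁
    (hStab₁ : ∀ ε > (0 : ℝ), ∃ δ > (0 : ℝ), ∀ (T : EReal) (φ : ℝ → EuclideanSpace ℝ (Fin m)),
      IsSolutionOn f₁ T φ → ‖φ 0‖ < δ → ∀ t : ℝ, 0 ≤ t → (t : EReal) < T → ‖φ t‖ < ε)
    -- the origin is globally attractive for the upper subsystem
    (hAttr₁ : ∀ φ : ℝ → EuclideanSpace ℝ (Fin m), IsSolutionOn f₁ ⊤ φ →
      Tendsto φ atTop (𝓝 0))
    -- the origin is stable for the zero-input lower subsystem ẋ₂ = f₂ (0, x₂)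
    (hStab₂ : ∀ ε > (0 : ℝ), ∃ δ > (0 : ℝ), ∀ (T : EReal) (φ : ℝ → EuclideanSpace ℝ (Fin k)),
      IsSolutionOn (fun y => f₂ (0, y)) T φ → ‖φ 0‖ < δ →
        ∀ t : ℝ, 0 ≤ t → (t : EReal) < T → ‖φ t‖ < ε)
    -- the origin is globally attractive for the zero-input lower subsystem
    (hAttr₂ : ∀ φ : ℝ → EuclideanSpace ℝ (Fin k), IsSolutionOn (fun y => f₂ (0, y)) ⊤ φ →
      Tendsto φ atTop (𝓝 0)) :
    -- the origin (0,0) is stable for the cascade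
    (∀ ε > (0 : ℝ), ∃ δ > (0 : ℝ), ∀ (T : EReal) (φ₁ : ℝ → EuclideanSpace ℝ (Fin m))
      (φ₂ : ℝ → EuclideanSpace ℝ (Fin k)), IsCascadeSolution f₁ f₂ T φ₁ φ₂ →
        ‖(φ₁ 0, φ₂ 0)‖ < δ → ∀ t : ℝ, 0 ≤ t → (t : EReal) < T → ‖(φ₁ t, φ₂ t)‖ < ε) ∧
    -- every bounded complete solution of the cascade converges to the origin
    (∀ (φ₁ : ℝ → EuclideanSpace ℝ (Fin m)) (φ₂ : ℝ → EuclideanSpace ℝ (Fin k)),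
      IsCascadeSolution f₁ f₂ ⊤ φ₁ φ₂ →
      (∃ Δ > (0 : ℝ), ∀ t : ℝ, 0 ≤ t → ‖(φ₁ t, φ₂ t)‖ < Δ) →
      Tendsto (fun t : ℝ => (φ₁ t, φ₂ t)) atTop (𝓝 (0, 0))) := by

  have hfst : ∀ (a : EuclideanSpace ℝ (Fin m)) (c : EuclideanSpace ℝ (Fin k)),
      ‖a‖ ≤ ‖(a, c)‖ := fun a c => by rw [Prod.norm_def]; exact le_max_left _ _
  have hsnd : ∀ (a : EuclideanSpace ℝ (Fin m)) (c : EuclideanSpace ℝ (Fin k)),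
      ‖c‖ ≤ ‖(a, c)‖ := fun a c => by rw [Prod.norm_def]; exact le_max_right _ _
  have hone : Tendsto (fun n : ℕ => 1/(n+1:ℝ)) atTop (𝓝 0) :=
    tendsto_one_div_add_atTop_nhds_zero_nat
  constructor
  · -- stability of the cascade
    by_contra hcon
    push_neg at hcon
    obtain ⟨ε₀, hε₀, hcon⟩ := hcon
    obtain ⟨δ₂, hδ₂pos, hδ₂⟩ := hStab₂ (ε₀/2) (by positivity)
    set δ := min δ₂ (ε₀/2) with hδdef
    have hδpos : 0 < δ := lt_min hδ₂pos (by positivity)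
    have hδle : δ ≤ ε₀/2 := min_le_right _ _
    have hstabδ : ∀ (T : EReal) (ψ : ℝ → EuclideanSpace ℝ (Fin k)),
        IsSolutionOn (fun y => f₂ (0, y)) T ψ → ‖ψ 0‖ < δ →
        ∀ t : ℝ, 0 ≤ t → (t:EReal) < T → ‖ψ t‖ < ε₀/2 :=
      fun T ψ hs h0 => hδ₂ T ψ hs (lt_of_lt_of_le h0 (min_le_left _ _))
    have hsel : ∀ n : ℕ, ∃ (T : EReal) (g₁ : ℝ → EuclideanSpace ℝ (Fin m))
        (g₂ : ℝ → EuclideanSpace ℝ (Fin k)),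
        IsCascadeSolution f₁ f₂ T g₁ g₂ ∧ ‖(g₁ 0, g₂ 0)‖ < 1/(n+1:ℝ) ∧
        ∃ t : ℝ, 0 ≤ t ∧ (t:EReal) < T ∧ ε₀ ≤ ‖(g₁ t, g₂ t)‖ :=
      fun n => hcon (1/(n+1:ℝ)) (by positivity)
    choose T g₁ g₂ hcasn hinit tex hex0 hexT hexε using hsel
    have hup : ∀ n, IsSolutionOn f₁ (T n) (g₁ n) :=
      fun n => ⟨(hcasn n).1, fun t ht htT => ((hcasn n).2 t ht htT).1⟩
    have hsmall1 : ∀ η : ℝ, 0 < η →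
        ∀ᶠ n in atTop, ∀ t : ℝ, 0 ≤ t → (t:EReal) < T n → ‖g₁ n t‖ < η := by
      intro η hη
      obtain ⟨δ₁, hδ₁pos, hδ₁⟩ := hStab₁ η hη
      have hev : ∀ᶠ n : ℕ in atTop, 1/(n+1:ℝ) < δ₁ := hone.eventually_lt_const hδ₁pos
      exact hev.mono fun n hn => hδ₁ (T n) (g₁ n) (hup n)
        (lt_trans (lt_of_le_of_lt (hfst _ _) (hinit n)) hn)
    obtain ⟨B, hB⟩ := ((isCompact_closedBall (0:EuclideanSpace ℝ (Fin m)) ε₀).prod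
      (isCompact_closedBall (0:EuclideanSpace ℝ (Fin k)) ε₀)).exists_bound_of_continuousOn
      hf₂.continuousOn
    set Cr : ℝ := max B 0 + 1 with hCrdef
    have hCrpos : 0 < Cr := by positivity
    have hCrB : ∀ (a : EuclideanSpace ℝ (Fin m)) (c : EuclideanSpace ℝ (Fin k)),
        ‖a‖ ≤ ε₀ → ‖c‖ ≤ ε₀ → ‖f₂ (a, c)‖ ≤ Cr := by
      intro a c h1 h2
      have h3 := hB (a, c) (Set.mem_prod.mpr ⟨mem_closedBall_zero_iff.mpr h1,
        mem_closedBall_zero_iff.mpr h2⟩)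
      have h4 := le_max_left B 0
      simp only [hCrdef]
      linarith
    set Cnn : ℝ≥0 := ⟨Cr, hCrpos.le⟩ with hCnndef
    have hCnncoe : (Cnn : ℝ) = Cr := rfl
    have hev1 := hsmall1 (δ/2) (by positivity)
    have hev2 : ∀ᶠ n : ℕ in atTop, 1/(n+1:ℝ) < δ/2 := hone.eventually_lt_const (by positivity)
    obtain ⟨N, hN⟩ := eventually_atTop.mp (hev1.and hev2)
    set c₀ : ℝ := (ε₀ - δ/2)/Cr with hc₀def
    have hδε : δ/2 < ε₀ := by linarith
    have hc₀pos : 0 < c₀ := div_pos (by linarith) hCrpos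
    have hkey : ∀ n : ℕ, ∃ bb ττ : ℝ, 0 ≤ bb ∧ bb ≤ ττ ∧ (ττ:EReal) < T (n+N) ∧
        (∀ u, 0 ≤ u → u ≤ ττ → ‖g₁ (n+N) u‖ ≤ ε₀ ∧ ‖g₂ (n+N) u‖ ≤ ε₀) ∧
        ‖g₂ (n+N) bb‖ ≤ δ/2 ∧
        (∀ u, bb < u → u ≤ ττ → δ/2 ≤ ‖g₂ (n+N) u‖) ∧
        ε₀ ≤ ‖g₂ (n+N) ττ‖ ∧ c₀ ≤ ττ - bb := by
      intro n
      obtain ⟨h1small, hinit_small⟩ := hN (n+N) (Nat.le_add_left N n)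
      have hteT := hexT (n+N)
      have hte0 := hex0 (n+N)
      have hiceS : Icc (0:ℝ) (tex (n+N)) ⊆ {s : ℝ | 0 ≤ s ∧ (s:EReal) < T (n+N)} := fun u hu =>
        ⟨hu.1, lt_of_le_of_lt (by exact_mod_cast hu.2) hteT⟩
      have hcont : ContinuousOn (fun u => (g₁ (n+N) u, g₂ (n+N) u)) (Icc 0 (tex (n+N))) := by
        intro u hu
        have h := (hcasn (n+N)).2 u (hiceS hu).1 (hiceS hu).2
        exact (h.1.continuousWithinAt.mono hiceS).prodMk (h.2.continuousWithinAt.mono hiceS)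
      have hnorm : ContinuousOn (fun u => ‖(g₁ (n+N) u, g₂ (n+N) u)‖) (Icc 0 (tex (n+N))) :=
        hcont.norm
      set Aset := Icc (0:ℝ) (tex (n+N)) ∩
        (fun u => ‖(g₁ (n+N) u, g₂ (n+N) u)‖) ⁻¹' (Ici ε₀) with hAdef
      have hAclosed : IsClosed Aset :=
        hnorm.preimage_isClosed_of_isClosed isClosed_Icc isClosed_Ici
      have hAcomp : IsCompact Aset := isCompact_Icc.of_isClosed_subset hAclosed
        Set.inter_subset_left
      have hAne : Aset.Nonempty := ⟨tex (n+N), ⟨⟨hte0, le_refl _⟩, hexε (n+N)⟩⟩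
      obtain ⟨τ, hτIcc, hτε, hless⟩ : ∃ τ, τ ∈ Icc (0:ℝ) (tex (n+N)) ∧
          ε₀ ≤ ‖(g₁ (n+N) τ, g₂ (n+N) τ)‖ ∧
          ∀ u, 0 ≤ u → u < τ → ‖(g₁ (n+N) u, g₂ (n+N) u)‖ < ε₀ := by
        refine ⟨sInf Aset, (hAcomp.sInf_mem hAne).1, (hAcomp.sInf_mem hAne).2, ?_⟩
        intro u hu0 huτ
        by_contra hcontra
        exact absurd (csInf_le hAcomp.bddBelow
          ⟨⟨hu0, huτ.le.trans (hAcomp.sInf_mem hAne).1.2⟩, not_lt.mp hcontra⟩)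
          (not_le.mpr huτ)
      have hinitε : ‖(g₁ (n+N) 0, g₂ (n+N) 0)‖ < δ/2 := lt_trans (hinit (n+N)) hinit_small
      have hτpos : 0 < τ := by
        rcases eq_or_lt_of_le hτIcc.1 with heq | h
        · exfalso; rw [← heq] at hτε; linarith
        · exact h
      have hbnd' : ∀ u, 0 ≤ u → u ≤ τ → ‖(g₁ (n+N) u, g₂ (n+N) u)‖ ≤ ε₀ := by
        intro u hu0 huτ
        rcases eq_or_lt_of_le huτ with heq | hlt
        · rw [heq]
          haveI hne : (𝓝[Ico (0:ℝ) τ] τ).NeBot := by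
            rw [← mem_closure_iff_nhdsWithin_neBot, closure_Ico hτpos.ne]
            exact right_mem_Icc.mpr hτpos.le
          have hcwa : ContinuousWithinAt (fun u => ‖(g₁ (n+N) u, g₂ (n+N) u)‖) (Ico 0 τ) τ :=
            (hnorm τ ⟨hτpos.le, hτIcc.2⟩).mono (fun x hx => ⟨hx.1, hx.2.le.trans hτIcc.2⟩)
          exact le_of_tendsto hcwa
            (eventually_mem_nhdsWithin.mono fun x hx => (hless x hx.1 hx.2).le)
        · exact (hless u hu0 hlt).le
      have hbnd1 : ∀ u, 0 ≤ u → u ≤ τ → ‖g₁ (n+N) u‖ ≤ ε₀ ∧ ‖g₂ (n+N) u‖ ≤ ε₀ := fun u h1 h2 =>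
        ⟨le_trans (hfst _ _) (hbnd' u h1 h2), le_trans (hsnd _ _) (hbnd' u h1 h2)⟩
      have hτT' : (τ:EReal) < T (n+N) := lt_of_le_of_lt (by exact_mod_cast hτIcc.2) hteT
      have hτ2 : ε₀ ≤ ‖g₂ (n+N) τ‖ := by
        by_contra hcontra
        have h2 : ‖(g₁ (n+N) τ, g₂ (n+N) τ)‖ < ε₀ := by
          rw [Prod.norm_def]
          exact max_lt (by linarith [h1small τ hτIcc.1 hτT']) (not_le.mp hcontra)
        linarith
      set Dset := Icc (0:ℝ) τ ∩ (fun u => ‖g₂ (n+N) u‖) ⁻¹' (Iic (δ/2)) with hDdef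
      have hφbcont : ContinuousOn (fun u => ‖g₂ (n+N) u‖) (Icc (0:ℝ) τ) :=
        ((continuous_snd.comp_continuousOn hcont).norm).mono
          (fun x hx => ⟨hx.1, hx.2.trans hτIcc.2⟩)
      have hDclosed : IsClosed Dset :=
        hφbcont.preimage_isClosed_of_isClosed isClosed_Icc isClosed_Iic
      have hDcomp : IsCompact Dset := isCompact_Icc.of_isClosed_subset hDclosed
        Set.inter_subset_left
      have hDne : Dset.Nonempty :=
        ⟨0, ⟨⟨le_refl _, hτpos.le⟩, le_trans (hsnd _ _) hinitε.le⟩⟩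
      obtain ⟨s, hsIcc, hsval, hsupper⟩ : ∃ s, s ∈ Icc (0:ℝ) τ ∧ ‖g₂ (n+N) s‖ ≤ δ/2 ∧
          ∀ u, s < u → u ≤ τ → δ/2 ≤ ‖g₂ (n+N) u‖ := by
        refine ⟨sSup Dset, (hDcomp.sSup_mem hDne).1, (hDcomp.sSup_mem hDne).2, ?_⟩
        intro u hsu huτ
        by_contra hcontra
        exact absurd (le_csSup hDcomp.bddAbove
          ⟨⟨le_trans (hDcomp.sSup_mem hDne).1.1 hsu.le, huτ⟩, (not_le.mp hcontra).le⟩)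
          (not_le.mpr hsu)
      have hsτ : s < τ := lt_of_le_of_ne hsIcc.2 (fun heq => by
        rw [heq] at hsval; linarith)
      have hIccsub : Icc s τ ⊆ {x : ℝ | 0 ≤ x ∧ (x:EReal) < T (n+N)} := fun u hu =>
        ⟨hsIcc.1.trans hu.1, lt_of_le_of_lt (by exact_mod_cast hu.2.trans hτIcc.2) hteT⟩
      have hderφb : ∀ x ∈ Icc s τ,
          HasDerivWithinAt (g₂ (n+N)) (f₂ (g₁ (n+N) x, g₂ (n+N) x)) (Icc s τ) x := fun x hx =>
        ((hcasn (n+N)).2 x (hIccsub hx).1 (hIccsub hx).2).2.mono hIccsub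
      have hmvt := Convex.norm_image_sub_le_of_norm_hasDerivWithin_le hderφb
        (fun x hx => hCrB _ _ (hbnd1 x (hsIcc.1.trans hx.1) hx.2).1
          (hbnd1 x (hsIcc.1.trans hx.1) hx.2).2)
        (convex_Icc s τ) (left_mem_Icc.mpr hsτ.le) (right_mem_Icc.mpr hsτ.le)
      have hgap : c₀ ≤ τ - s := by
        have h1 := norm_sub_norm_le (g₂ (n+N) τ) (g₂ (n+N) s)
        rw [Real.norm_eq_abs, abs_of_nonneg (by linarith)] at hmvt
        rw [hc₀def, div_le_iff₀ hCrpos]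
        nlinarith
      exact ⟨s, τ, hsIcc.1, hsτ.le, hτT', hbnd1, hsval, hsupper, hτ2, hgap⟩
    choose bb ττ hbb0 hbτ hτT hbnd hP3 hP4 hP5 hP6 using hkey
    have hLnn : ∀ n : ℕ, (0:ℝ) ≤ ττ n - bb n := fun n => le_trans hc₀pos.le (hP6 n)
    have htrans := fun n : ℕ => cascade_translate (hcasn (n+N)) (hbb0 n) (hLnn n)
      (by rw [show bb n + (ττ n - bb n) = ττ n from by ring]; exact hτT n) Cnn
      (fun u hu1 hu2 => by
        rw [hCnncoe]
        have hu2' : u ≤ ττ n := by linarith [hu2]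
        exact hCrB _ _ (hbnd n u ((hbb0 n).trans hu1) hu2').1
          (hbnd n u ((hbb0 n).trans hu1) hu2').2)
    refine no_annulus_escape f₂ hf₂ ε₀ δ hε₀ hδpos hstabδ hAttr₂ c₀ hc₀pos
      (fun n => ττ n - bb n) hP6
      (fun n t => g₁ (n+N) (bb n + max 0 (min t (ττ n - bb n))))
      (fun n t => g₂ (n+N) (bb n + max 0 (min t (ττ n - bb n))))
      Cnn ε₀ (fun n => (htrans n).1) (fun n => (htrans n).2.1) ?_ ?_ ?_
      (fun n t ht htL => (htrans n).2.2 t ht htL) ?_ ?_ ?_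
    · intro n t
      have h1 := clamp_mem (hLnn n) t
      exact (hbnd n _ (by linarith [(hbb0 n), h1.1]) (by linarith [h1.2])).2
    · intro n t
      have h1 := clamp_mem (hLnn n) t
      exact (hbnd n _ (by linarith [(hbb0 n), h1.1]) (by linarith [h1.2])).1
    · intro η hη
      obtain ⟨M, hM⟩ := eventually_atTop.mp (hsmall1 η hη)
      rw [eventually_atTop]
      refine ⟨M, fun n hn t => ?_⟩
      have h1 := clamp_mem (hLnn n) t
      have h2 : (0:ℝ) ≤ bb n + max 0 (min t (ττ n - bb n)) := by linarith [(hbb0 n), h1.1]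
      have h3 : ((bb n + max 0 (min t (ττ n - bb n)) : ℝ):EReal) < T (n+N) :=
        lt_of_le_of_lt
          (by exact_mod_cast (show bb n + max 0 (min t (ττ n - bb n)) ≤ ττ n by linarith [h1.2]))
          (hτT n)
      exact (hM (n+N) (le_trans hn (Nat.le_add_right n N)) _ h2 h3).le
    · intro n
      show ‖g₂ (n+N) (bb n + max 0 (min 0 (ττ n - bb n)))‖ ≤ δ/2
      rw [clamp_eq le_rfl (hLnn n), add_zero]
      exact hP3 n
    · intro n t ht htL
      have htL' : t ≤ ττ n - bb n := htL
      show δ/2 ≤ ‖g₂ (n+N) (bb n + max 0 (min t (ττ n - bb n)))‖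
      rw [clamp_eq ht.le htL']
      exact hP4 n _ (by linarith) (by linarith)
    · intro n
      show ε₀ ≤ ‖g₂ (n+N) (bb n + max 0 (min (ττ n - bb n) (ττ n - bb n)))‖
      rw [clamp_eq (hLnn n) le_rfl, show bb n + (ττ n - bb n) = ττ n from by ring]
      exact hP5 n
  · -- bounded complete solutions converge
    rintro p₁ p₂ hcas ⟨Δ, hΔpos, hΔ⟩
    have hup : IsSolutionOn f₁ ⊤ p₁ := ⟨hcas.1, fun t ht htT => (hcas.2 t ht htT).1⟩
    have h1 : Tendsto p₁ atTop (𝓝 0) := hAttr₁ p₁ hup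
    have hbd1 : ∀ u : ℝ, 0 ≤ u → ‖p₁ u‖ ≤ Δ ∧ ‖p₂ u‖ ≤ Δ := fun u hu =>
      ⟨le_trans (hfst _ _) (hΔ u hu).le, le_trans (hsnd _ _) (hΔ u hu).le⟩
    have h2 : Tendsto p₂ atTop (𝓝 0) := by
      by_contra hnot
      rw [NormedAddCommGroup.tendsto_nhds_zero] at hnot
      push_neg at hnot
      obtain ⟨ε₀, hε₀, hfreq⟩ := hnot
      obtain ⟨δ₂, hδ₂pos, hδ₂⟩ := hStab₂ (ε₀/2) (by positivity)
      set δ := min δ₂ (ε₀/2) with hδdef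
      have hδpos : 0 < δ := lt_min hδ₂pos (by positivity)
      have hδle : δ ≤ ε₀/2 := min_le_right _ _
      have hstabδ : ∀ (T : EReal) (ψ : ℝ → EuclideanSpace ℝ (Fin k)),
          IsSolutionOn (fun y => f₂ (0, y)) T ψ → ‖ψ 0‖ < δ →
          ∀ t : ℝ, 0 ≤ t → (t:EReal) < T → ‖ψ t‖ < ε₀/2 :=
        fun T ψ hs h0 => hδ₂ T ψ hs (lt_of_lt_of_le h0 (min_le_left _ _))
      obtain ⟨B, hB⟩ := ((isCompact_closedBall (0:EuclideanSpace ℝ (Fin m)) Δ).prod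
        (isCompact_closedBall (0:EuclideanSpace ℝ (Fin k)) Δ)).exists_bound_of_continuousOn
        hf₂.continuousOn
      set Cr : ℝ := max B 0 + 1 with hCrdef
      have hCrpos : 0 < Cr := by positivity
      have hCrB : ∀ (a : EuclideanSpace ℝ (Fin m)) (c : EuclideanSpace ℝ (Fin k)),
          ‖a‖ ≤ Δ → ‖c‖ ≤ Δ → ‖f₂ (a, c)‖ ≤ Cr := by
        intro a c ha hc
        have h3 := hB (a, c) (Set.mem_prod.mpr ⟨mem_closedBall_zero_iff.mpr ha,
          mem_closedBall_zero_iff.mpr hc⟩)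
        have h4 := le_max_left B 0
        simp only [hCrdef]
        linarith
      set Cnn : ℝ≥0 := ⟨Cr, hCrpos.le⟩ with hCnndef
      have hCnncoe : (Cnn : ℝ) = Cr := rfl
      rw [NormedAddCommGroup.tendsto_nhds_zero] at h1
      have hsmall1 : ∀ η : ℝ, 0 < η → ∀ᶠ n : ℕ in atTop,
          ∀ u : ℝ, (n:ℝ) ≤ u → ‖p₁ u‖ ≤ η := by
        intro η hη
        obtain ⟨Rr, hRr⟩ := eventually_atTop.mp (h1 η hη)
        have hev : ∀ᶠ n : ℕ in atTop, Rr ≤ (n:ℝ) :=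
          tendsto_natCast_atTop_atTop.eventually_ge_atTop Rr
        exact hev.mono fun n hn u hu => (hRr u (le_trans hn hu)).le
      by_cases hcaseA : ∀ t₀ : ℝ, ∃ u, t₀ ≤ u ∧ 0 ≤ u ∧ ‖p₂ u‖ ≤ δ/2
      · -- case (b): the solution keeps dipping below δ/2 yet returns above ε₀
        set c₀ : ℝ := (ε₀ - δ/2)/Cr with hc₀def
        have hδε : δ/2 < ε₀ := by linarith
        have hc₀pos : 0 < c₀ := div_pos (by linarith) hCrpos
        have hSsub : ∀ a b : ℝ, 0 ≤ a → Icc a b ⊆ {s : ℝ | 0 ≤ s ∧ (s:EReal) < (⊤:EReal)} :=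
          fun a b ha u hu => ⟨ha.trans hu.1, EReal.coe_lt_top u⟩
        have hkey : ∀ n : ℕ, ∃ ss tt : ℝ, 0 ≤ ss ∧ (n:ℝ) ≤ ss ∧ ss ≤ tt ∧
            ‖p₂ ss‖ ≤ δ/2 ∧ (∀ u, ss < u → u ≤ tt → δ/2 ≤ ‖p₂ u‖) ∧
            ε₀ ≤ ‖p₂ tt‖ ∧ c₀ ≤ tt - ss := by
          intro n
          obtain ⟨u, hu1, hu2, hu3⟩ := hcaseA (n:ℝ)
          obtain ⟨tt, htt1, htt2⟩ := frequently_atTop.mp hfreq u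
          have hutt : u < tt := lt_of_le_of_ne htt1 (fun heq => by
            rw [heq] at hu3; linarith)
          have hcont : ContinuousOn (fun v => (p₁ v, p₂ v)) (Icc u tt) := by
            intro v hv
            have h := hcas.2 v (hu2.trans hv.1) (EReal.coe_lt_top v)
            exact ((h.1.continuousWithinAt.mono (hSsub u tt hu2)).prodMk
              (h.2.continuousWithinAt.mono (hSsub u tt hu2)))
          have hφbcont : ContinuousOn (fun v => ‖p₂ v‖) (Icc u tt) :=
            (continuous_snd.comp_continuousOn hcont).norm
          set Dset := Icc u tt ∩ (fun v => ‖p₂ v‖) ⁻¹' (Iic (δ/2)) with hDdef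
          have hDclosed : IsClosed Dset :=
            hφbcont.preimage_isClosed_of_isClosed isClosed_Icc isClosed_Iic
          have hDcomp : IsCompact Dset := isCompact_Icc.of_isClosed_subset hDclosed
            Set.inter_subset_left
          have hDne : Dset.Nonempty := ⟨u, ⟨⟨le_refl _, hutt.le⟩, hu3⟩⟩
          obtain ⟨ss, hsIcc, hsval, hsupper⟩ : ∃ ss, ss ∈ Icc u tt ∧ ‖p₂ ss‖ ≤ δ/2 ∧
              ∀ v, ss < v → v ≤ tt → δ/2 ≤ ‖p₂ v‖ := by
            refine ⟨sSup Dset, (hDcomp.sSup_mem hDne).1, (hDcomp.sSup_mem hDne).2, ?_⟩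
            intro v hsv hvtt
            by_contra hcontra
            exact absurd (le_csSup hDcomp.bddAbove
              ⟨⟨le_trans (hDcomp.sSup_mem hDne).1.1 hsv.le, hvtt⟩, (not_le.mp hcontra).le⟩)
              (not_le.mpr hsv)
          have hss0 : 0 ≤ ss := hu2.trans hsIcc.1
          have hsstt : ss < tt := lt_of_le_of_ne hsIcc.2 (fun heq => by
            rw [heq] at hsval; linarith)
          have hderφb : ∀ x ∈ Icc ss tt,
              HasDerivWithinAt p₂ (f₂ (p₁ x, p₂ x)) (Icc ss tt) x := fun x hx =>
            (hcas.2 x (hss0.trans hx.1) (EReal.coe_lt_top x)).2.mono (hSsub ss tt hss0)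
          have hmvt := Convex.norm_image_sub_le_of_norm_hasDerivWithin_le hderφb
            (fun x hx => hCrB _ _ (hbd1 x (hss0.trans hx.1)).1 (hbd1 x (hss0.trans hx.1)).2)
            (convex_Icc ss tt) (left_mem_Icc.mpr hsstt.le) (right_mem_Icc.mpr hsstt.le)
          have hgap : c₀ ≤ tt - ss := by
            have hd := norm_sub_norm_le (p₂ tt) (p₂ ss)
            rw [Real.norm_eq_abs, abs_of_nonneg (by linarith)] at hmvt
            rw [hc₀def, div_le_iff₀ hCrpos]
            nlinarith
          exact ⟨ss, tt, hss0, le_trans hu1 hsIcc.1, hsstt.le, hsval, hsupper, htt2, hgap⟩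
        choose bb ττ hbb0 hbbn hbτ hP3 hP4 hP5 hP6 using hkey
        have hLnn : ∀ n : ℕ, (0:ℝ) ≤ ττ n - bb n := fun n => le_trans hc₀pos.le (hP6 n)
        have htrans := fun n : ℕ => cascade_translate hcas (hbb0 n) (hLnn n)
          (EReal.coe_lt_top _) Cnn
          (fun u hu1 hu2 => by
            rw [hCnncoe]
            exact hCrB _ _ (hbd1 u ((hbb0 n).trans hu1)).1 (hbd1 u ((hbb0 n).trans hu1)).2)
        refine no_annulus_escape f₂ hf₂ ε₀ δ hε₀ hδpos hstabδ hAttr₂ c₀ hc₀pos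
          (fun n => ττ n - bb n) hP6
          (fun n t => p₁ (bb n + max 0 (min t (ττ n - bb n))))
          (fun n t => p₂ (bb n + max 0 (min t (ττ n - bb n))))
          Cnn Δ (fun n => (htrans n).1) (fun n => (htrans n).2.1) ?_ ?_ ?_
          (fun n t ht htL => (htrans n).2.2 t ht htL) ?_ ?_ ?_
        · intro n t
          have hcl := clamp_mem (hLnn n) t
          exact (hbd1 _ (by linarith [(hbb0 n), hcl.1])).2
        · intro n t
          have hcl := clamp_mem (hLnn n) t
          exact (hbd1 _ (by linarith [(hbb0 n), hcl.1])).1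
        · intro η hη
          obtain ⟨M, hM⟩ := eventually_atTop.mp (hsmall1 η hη)
          rw [eventually_atTop]
          refine ⟨M, fun n hn t => ?_⟩
          have hcl := clamp_mem (hLnn n) t
          refine hM n hn _ ?_
          have := hbbn n
          linarith [hcl.1]
        · intro n
          show ‖p₂ (bb n + max 0 (min 0 (ττ n - bb n)))‖ ≤ δ/2
          rw [clamp_eq le_rfl (hLnn n), add_zero]
          exact hP3 n
        · intro n t ht htL
          have htL' : t ≤ ττ n - bb n := htL
          show δ/2 ≤ ‖p₂ (bb n + max 0 (min t (ττ n - bb n)))‖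
          rw [clamp_eq ht.le htL']
          exact hP4 n _ (by linarith) (by linarith)
        · intro n
          show ε₀ ≤ ‖p₂ (bb n + max 0 (min (ττ n - bb n) (ττ n - bb n)))‖
          rw [clamp_eq (hLnn n) le_rfl, show bb n + (ττ n - bb n) = ττ n from by ring]
          exact hP5 n
      · -- case (a): the solution stays above δ/2 forever
        push_neg at hcaseA
        obtain ⟨t₀, ht₀⟩ := hcaseA
        set b0 : ℝ := max t₀ 0 with hb0def
        have hb00 : 0 ≤ b0 := le_max_right _ _
        have hb0t : t₀ ≤ b0 := le_max_left _ _
        have hlow : ∀ u : ℝ, b0 ≤ u → δ/2 < ‖p₂ u‖ := fun u hu =>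
          ht₀ u (hb0t.trans hu) (hb00.trans hu)
        have htrans := fun n : ℕ => cascade_translate hcas (b := b0 + n) (L := (n:ℝ)+1)
          (by positivity) (by positivity) (EReal.coe_lt_top _) Cnn
          (fun u hu1 hu2 => by
            rw [hCnncoe]
            have hu0 : (0:ℝ) ≤ u := le_trans (by positivity) hu1
            exact hCrB _ _ (hbd1 u hu0).1 (hbd1 u hu0).2)
        have hLtop : ∀ A : ℝ, ∀ᶠ n : ℕ in atTop, A ≤ (n:ℝ)+1 := by
          intro A
          exact (tendsto_natCast_atTop_atTop.eventually_ge_atTop A).mono fun n hn => by linarith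
        refine no_complete_annulus f₂ hf₂ hAttr₂ (δ/2) (by positivity)
          (fun n => (n:ℝ)+1) hLtop
          (fun n t => p₁ (b0 + n + max 0 (min t ((n:ℝ)+1))))
          (fun n t => p₂ (b0 + n + max 0 (min t ((n:ℝ)+1))))
          Cnn Δ (fun n => (htrans n).1) (fun n => (htrans n).2.1) ?_ ?_ ?_
          (fun n t ht htL => (htrans n).2.2 t ht htL) ?_
        · intro n t
          have hcl := clamp_mem (by positivity : (0:ℝ) ≤ (n:ℝ)+1) t
          exact (hbd1 _ (by positivity)).2
        · intro n t
          have hcl := clamp_mem (by positivity : (0:ℝ) ≤ (n:ℝ)+1) t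
          exact (hbd1 _ (by positivity)).1
        · intro η hη
          obtain ⟨M, hM⟩ := eventually_atTop.mp (hsmall1 η hη)
          rw [eventually_atTop]
          refine ⟨M, fun n hn t => ?_⟩
          have hcl := clamp_mem (by positivity : (0:ℝ) ≤ (n:ℝ)+1) t
          refine hM n hn _ ?_
          linarith [hcl.1, hb00]
        · intro n t ht htL
          have hcl := clamp_mem (by positivity : (0:ℝ) ≤ (n:ℝ)+1) t
          exact (hlow _ (by linarith [hcl.1, Nat.cast_nonneg (α := ℝ) n])).le
    exact h1.prodMk_nhds h2
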